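/- The germ semiring ℕ̄_ε: fix q ∈ (0,1) and consider germs at ε = 0 of continuous functions from a neighborhood of 0 ∈ ℝ to ℝ_max⁺ = (ℝ≥0, max, ×) with pointwise operations. The sub-semiring generated by the constant germ q and the germ ε ↦ q^(1+ε) consists of germs of the form ε ↦ max_i q^(a_i + b_i(1+ε)) with a_i, b_i ∈ ℕ (together with 0 and 1), and up to canonical isomorphism it is independent of the choice of q ∈ (0,1). -/
import Mathlib


/-- The function ε ↦ max_i q^(a_i + b_i(1+ε)) associated to a finite list of pairs
(a_i, b_i) ∈ ℕ × ℕ (with the empty list giving 0). -/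
noncomputable def elemF (q : ℝ) (L : List (ℕ × ℕ)) : ℝ → ℝ := fun ε =>
  (L.map fun p : ℕ × ℕ => q ^ ((p.1 : ℝ) + (p.2 : ℝ) * (1 + ε))).foldr max 0

/-- The sub-semiring ℕ̄_ε(q) of the semiring of germs at 0 of functions ℝ → ℝ≥0
(pointwise max and product), generated by the constant germ q and the germ
ε ↦ q^(1+ε): the smallest subset containing 0, 1 and the two generators and closed
under ⊔ and ×. -/
def gen (q : ℝ) : Set (Filter.Germ (nhds (0 : ℝ)) ℝ) :=
  ⋂₀ {S : Set (Filter.Germ (nhds (0 : ℝ)) ℝ) |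
      (0 : Filter.Germ (nhds (0 : ℝ)) ℝ) ∈ S ∧
      (1 : Filter.Germ (nhds (0 : ℝ)) ℝ) ∈ S ∧
      ((fun _ : ℝ => q : ℝ → ℝ) : Filter.Germ (nhds (0 : ℝ)) ℝ) ∈ S ∧
      ((fun ε : ℝ => q ^ (1 + ε) : ℝ → ℝ) : Filter.Germ (nhds (0 : ℝ)) ℝ) ∈ S ∧
      ∀ x ∈ S, ∀ y ∈ S, x ⊔ y ∈ S ∧ x * y ∈ S}

abbrev G := Filter.Germ (nhds (0 : ℝ)) ℝ

lemma coe_sup' (f g : ℝ → ℝ) :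
    ((f : ℝ → ℝ) : G) ⊔ ((g : ℝ → ℝ) : G) = ((fun ε => max (f ε) (g ε) : ℝ → ℝ) : G) := rfl

lemma coe_mul' (f g : ℝ → ℝ) :
    ((f : ℝ → ℝ) : G) * ((g : ℝ → ℝ) : G) = ((fun ε => f ε * g ε : ℝ → ℝ) : G) := rfl

lemma coe_zero' : (((fun _ => 0 : ℝ → ℝ)) : G) = 0 := rfl

lemma elemF_cons (q : ℝ) (p : ℕ × ℕ) (L : List (ℕ × ℕ)) (ε : ℝ) :
    elemF q (p :: L) ε = max (q ^ ((p.1 : ℝ) + (p.2 : ℝ) * (1 + ε))) (elemF q L ε) := rfl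

lemma elemF_nil (q : ℝ) (ε : ℝ) : elemF q [] ε = 0 := rfl

lemma elemF_nonneg (q : ℝ) (L : List (ℕ × ℕ)) (ε : ℝ) : 0 ≤ elemF q L ε := by
  induction L with
  | nil => simp [elemF_nil]
  | cons p L ih => rw [elemF_cons]; exact le_max_of_le_right ih

lemma elemF_append (q : ℝ) (L M : List (ℕ × ℕ)) (ε : ℝ) :
    elemF q (L ++ M) ε = max (elemF q L ε) (elemF q M ε) := by
  induction L with
  | nil => rw [List.nil_append, elemF_nil, max_eq_right (elemF_nonneg q M ε)]
  | cons p L ih => rw [List.cons_append, elemF_cons, elemF_cons, ih, max_assoc]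

def mulL (L M : List (ℕ × ℕ)) : List (ℕ × ℕ) :=
  L.flatMap fun p => M.map fun r => (p.1 + r.1, p.2 + r.2)

lemma term_mul {q : ℝ} (hq : 0 < q) (a b a' b' : ℕ) (ε : ℝ) :
    q ^ ((a : ℝ) + (b : ℝ) * (1 + ε)) * q ^ ((a' : ℝ) + (b' : ℝ) * (1 + ε))
      = q ^ (((a + a' : ℕ) : ℝ) + ((b + b' : ℕ) : ℝ) * (1 + ε)) := by
  rw [← Real.rpow_add hq]; congr 1; push_cast; ring

lemma term_smul {q : ℝ} (hq : 0 < q) (a b : ℕ) (M : List (ℕ × ℕ)) (ε : ℝ) :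
    q ^ ((a : ℝ) + (b : ℝ) * (1 + ε)) * elemF q M ε
      = elemF q (M.map fun r => (a + r.1, b + r.2)) ε := by
  induction M with
  | nil => simp [elemF_nil]
  | cons r M ih =>
      rw [List.map_cons, elemF_cons, elemF_cons, mul_max_of_nonneg _ _ (Real.rpow_nonneg hq.le _),
        ih, term_mul hq]

lemma elemF_mul {q : ℝ} (hq : 0 < q) (L M : List (ℕ × ℕ)) (ε : ℝ) :
    elemF q L ε * elemF q M ε = elemF q (mulL L M) ε := by
  induction L with
  | nil => simp [elemF_nil, mulL]
  | cons p L ih =>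
      rw [elemF_cons, max_mul_of_nonneg _ _ (elemF_nonneg q M ε), ih]
      rw [show mulL (p :: L) M = (M.map fun r => (p.1 + r.1, p.2 + r.2)) ++ mulL L M from rfl,
        elemF_append, term_smul hq]

lemma mulL_ne_nil {L M : List (ℕ × ℕ)} (hL : L ≠ []) (hM : M ≠ []) : mulL L M ≠ [] := by
  rcases List.exists_cons_of_ne_nil hL with ⟨p, L', rfl⟩
  rcases List.exists_cons_of_ne_nil hM with ⟨r, M', rfl⟩
  simp [mulL]

-- germ-level lemmas
lemma germ_elemF_nil (q : ℝ) : ((elemF q [] : ℝ → ℝ) : G) = 0 := rfl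

lemma germ_one {q : ℝ} (hq : 0 < q) :
    (1 : G) = ((elemF q [((0:ℕ),(0:ℕ))] : ℝ → ℝ) : G) := by
  rw [← Filter.Germ.coe_one]
  congr 1; funext ε
  rw [show (1 : ℝ → ℝ) ε = 1 from rfl, elemF_cons, elemF_nil]
  norm_num

lemma germ_q {q : ℝ} (hq : 0 < q) :
    ((fun _ : ℝ => q : ℝ → ℝ) : G) = ((elemF q [((1:ℕ),(0:ℕ))] : ℝ → ℝ) : G) := by
  congr 1; funext ε
  rw [elemF_cons, elemF_nil]
  norm_num
  exact hq.le

lemma germ_gen {q : ℝ} (hq : 0 < q) :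
    ((fun ε : ℝ => q ^ (1 + ε) : ℝ → ℝ) : G) = ((elemF q [((0:ℕ),(1:ℕ))] : ℝ → ℝ) : G) := by
  congr 1; funext ε
  rw [elemF_cons, elemF_nil]
  norm_num
  exact Real.rpow_nonneg hq.le _

lemma germ_sup (q : ℝ) (L M : List (ℕ × ℕ)) :
    ((elemF q L : ℝ → ℝ) : G) ⊔ ((elemF q M : ℝ → ℝ) : G)
      = ((elemF q (L ++ M) : ℝ → ℝ) : G) := by
  rw [coe_sup']; congr 1; funext ε; rw [elemF_append]

lemma germ_mul {q : ℝ} (hq : 0 < q) (L M : List (ℕ × ℕ)) :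
    ((elemF q L : ℝ → ℝ) : G) * ((elemF q M : ℝ → ℝ) : G)
      = ((elemF q (mulL L M) : ℝ → ℝ) : G) := by
  rw [coe_mul']; congr 1; funext ε; rw [elemF_mul hq]

lemma zero_sup_elem (q : ℝ) (L : List (ℕ × ℕ)) :
    (0 : G) ⊔ ((elemF q L : ℝ → ℝ) : G) = ((elemF q L : ℝ → ℝ) : G) := by
  rw [← Filter.Germ.coe_zero, coe_sup']
  congr 1; funext ε
  exact max_eq_right (elemF_nonneg q L ε)

def S (q : ℝ) : Set G := {x : G | x = 0 ∨ ∃ L : List (ℕ × ℕ), L ≠ [] ∧ x = ((elemF q L : ℝ → ℝ) : G)}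

lemma gen_subset_S {q : ℝ} (hq : q ∈ Set.Ioo (0:ℝ) 1) : gen q ⊆ S q := by
  intro x hx
  refine hx (S q) ⟨Or.inl rfl, ?_, ?_, ?_, ?_⟩
  · exact Or.inr ⟨[((0:ℕ),(0:ℕ))], by simp, germ_one hq.1⟩
  · exact Or.inr ⟨[((1:ℕ),(0:ℕ))], by simp, germ_q hq.1⟩
  · exact Or.inr ⟨[((0:ℕ),(1:ℕ))], by simp, germ_gen hq.1⟩
  · rintro x (rfl | ⟨L, hL, rfl⟩) y (rfl | ⟨M, hM, rfl⟩)
    · exact ⟨Or.inl (by rw [sup_idem]), Or.inl (by rw [mul_zero])⟩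
    · exact ⟨Or.inr ⟨M, hM, (zero_sup_elem q M).symm ▸ rfl⟩, Or.inl (zero_mul _)⟩
    · refine ⟨Or.inr ⟨L, hL, ?_⟩, Or.inl (mul_zero _)⟩
      rw [sup_comm, zero_sup_elem]
    · exact ⟨Or.inr ⟨L ++ M, by simp [hL], germ_sup q L M⟩,
        Or.inr ⟨mulL L M, mulL_ne_nil hL hM, germ_mul hq.1 L M⟩⟩

lemma single_mem {q : ℝ} (hq : 0 < q) {T : Set G}
    (hT : T ∈ {S : Set G | (0 : G) ∈ S ∧ (1 : G) ∈ S ∧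
      ((fun _ : ℝ => q : ℝ → ℝ) : G) ∈ S ∧
      ((fun ε : ℝ => q ^ (1 + ε) : ℝ → ℝ) : G) ∈ S ∧
      ∀ x ∈ S, ∀ y ∈ S, x ⊔ y ∈ S ∧ x * y ∈ S}) (a b : ℕ) :
    ((fun ε : ℝ => q ^ ((a : ℝ) + (b : ℝ) * (1 + ε)) : ℝ → ℝ) : G) ∈ T := by
  obtain ⟨h0, h1, hcq, hgen, hcl⟩ := hT
  induction a with
  | zero =>
      induction b with
      | zero =>
          have : ((fun ε : ℝ => q ^ (((0:ℕ) : ℝ) + ((0:ℕ) : ℝ) * (1 + ε)) : ℝ → ℝ) : G) = 1 := by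
            rw [← Filter.Germ.coe_one]; congr 1; funext ε; norm_num
          rw [this]; exact h1
      | succ b ihb =>
          have : ((fun ε : ℝ => q ^ (((0:ℕ) : ℝ) + (((b+1:ℕ)) : ℝ) * (1 + ε)) : ℝ → ℝ) : G)
              = ((fun ε : ℝ => q ^ (((0:ℕ) : ℝ) + ((b:ℕ) : ℝ) * (1 + ε)) : ℝ → ℝ) : G)
                * ((fun ε : ℝ => q ^ (1 + ε) : ℝ → ℝ) : G) := by
            rw [coe_mul']; congr 1; funext ε
            rw [← Real.rpow_add hq]; congr 1; push_cast; ring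
          rw [this]; exact (hcl _ ihb _ hgen).2
  | succ a iha =>
      have : ((fun ε : ℝ => q ^ (((a+1:ℕ) : ℝ) + ((b:ℕ) : ℝ) * (1 + ε)) : ℝ → ℝ) : G)
          = ((fun _ : ℝ => q : ℝ → ℝ) : G)
            * ((fun ε : ℝ => q ^ (((a:ℕ) : ℝ) + ((b:ℕ) : ℝ) * (1 + ε)) : ℝ → ℝ) : G) := by
        rw [coe_mul']; congr 1; funext ε
        have he : ((a+1:ℕ) : ℝ) + ((b:ℕ) : ℝ) * (1 + ε) = 1 + (((a:ℕ):ℝ) + ((b:ℕ):ℝ) * (1 + ε)) := by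
          push_cast; ring
        rw [he, Real.rpow_add hq, Real.rpow_one]
      rw [this]; exact (hcl _ hcq _ iha).2

lemma S_subset_gen {q : ℝ} (hq : q ∈ Set.Ioo (0:ℝ) 1) : S q ⊆ gen q := by
  rintro x (rfl | ⟨L, hL, rfl⟩) T hT
  · exact hT.1
  · clear hL
    induction L with
    | nil => rw [germ_elemF_nil]; exact hT.1
    | cons p L ih =>
        have : ((elemF q (p :: L) : ℝ → ℝ) : G)
            = ((fun ε : ℝ => q ^ ((p.1 : ℝ) + (p.2 : ℝ) * (1 + ε)) : ℝ → ℝ) : G)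
              ⊔ ((elemF q L : ℝ → ℝ) : G) := rfl
        rw [this]
        exact (hT.2.2.2.2 _ (single_mem hq.1 hT p.1 p.2) _ ih).1

lemma gen_eq_S {q : ℝ} (hq : q ∈ Set.Ioo (0:ℝ) 1) : gen q = S q :=
  le_antisymm (gen_subset_S hq) (S_subset_gen hq)

noncomputable def gq (q q' : ℝ) : ℝ → ℝ := fun t =>
  if t ≤ 0 then 0 else q' ^ (Real.log t / Real.log q)

lemma gq_zero (q q' : ℝ) : gq q q' 0 = 0 := if_pos le_rfl

lemma gq_nonneg {q' : ℝ} (hq' : 0 < q') (q t : ℝ) : 0 ≤ gq q q' t := by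
  unfold gq; split
  · exact le_rfl
  · exact Real.rpow_nonneg hq'.le _

lemma gq_rpow {q q' : ℝ} (hq : q ∈ Set.Ioo (0:ℝ) 1) (e : ℝ) : gq q q' (q ^ e) = q' ^ e := by
  have h : (0:ℝ) < q ^ e := Real.rpow_pos_of_pos hq.1 e
  rw [gq, if_neg (not_le.mpr h), Real.log_rpow hq.1,
    mul_div_cancel_right₀ e (ne_of_lt (Real.log_neg hq.1 hq.2))]

lemma gq_one {q q' : ℝ} (hq : q ∈ Set.Ioo (0:ℝ) 1) : gq q q' 1 = 1 := by
  have := gq_rpow (q' := q') hq 0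
  rwa [Real.rpow_zero, Real.rpow_zero] at this

lemma gq_mono {q q' : ℝ} (hq : q ∈ Set.Ioo (0:ℝ) 1) (hq' : q' ∈ Set.Ioo (0:ℝ) 1)
    {a b : ℝ} (ha : 0 ≤ a) (hab : a ≤ b) : gq q q' a ≤ gq q q' b := by
  unfold gq
  by_cases hb : b ≤ 0
  · rw [if_pos hb, if_pos (hab.trans hb)]
  · rw [if_neg hb]
    by_cases ha0 : a ≤ 0
    · rw [if_pos ha0]; exact Real.rpow_nonneg hq'.1.le _
    · rw [if_neg ha0]
      push_neg at ha0 hb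
      refine Real.rpow_le_rpow_of_exponent_ge hq'.1 hq'.2.le ?_
      rw [div_eq_mul_inv, div_eq_mul_inv]
      exact mul_le_mul_of_nonpos_right (Real.log_le_log ha0 hab)
        (inv_nonpos.mpr (Real.log_neg hq.1 hq.2).le)

lemma gq_max {q q' : ℝ} (hq : q ∈ Set.Ioo (0:ℝ) 1) (hq' : q' ∈ Set.Ioo (0:ℝ) 1)
    {a b : ℝ} (ha : 0 ≤ a) (hb : 0 ≤ b) :
    gq q q' (max a b) = max (gq q q' a) (gq q q' b) := by
  rcases le_total a b with h | h
  · rw [max_eq_right h, max_eq_right (gq_mono hq hq' ha h)]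
  · rw [max_eq_left h, max_eq_left (gq_mono hq hq' hb h)]

lemma gq_mul {q q' : ℝ} (hq : q ∈ Set.Ioo (0:ℝ) 1) (hq' : q' ∈ Set.Ioo (0:ℝ) 1)
    {a b : ℝ} (ha : 0 ≤ a) (hb : 0 ≤ b) :
    gq q q' (a * b) = gq q q' a * gq q q' b := by
  rcases ha.eq_or_lt with rfl | ha0
  · rw [zero_mul, gq_zero, zero_mul]
  rcases hb.eq_or_lt with rfl | hb0
  · rw [mul_zero, gq_zero, mul_zero]
  have hab : 0 < a * b := mul_pos ha0 hb0
  unfold gq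
  rw [if_neg (not_le.mpr hab), if_neg (not_le.mpr ha0), if_neg (not_le.mpr hb0),
    Real.log_mul (ne_of_gt ha0) (ne_of_gt hb0), add_div, Real.rpow_add hq'.1]

lemma gq_elemF {q q' : ℝ} (hq : q ∈ Set.Ioo (0:ℝ) 1) (hq' : q' ∈ Set.Ioo (0:ℝ) 1)
    (L : List (ℕ × ℕ)) (ε : ℝ) : gq q q' (elemF q L ε) = elemF q' L ε := by
  induction L with
  | nil => rw [elemF_nil, gq_zero, elemF_nil]
  | cons p L ih =>
      rw [elemF_cons, elemF_cons,
        gq_max hq hq' (Real.rpow_nonneg hq.1.le _) (elemF_nonneg q L ε),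
        gq_rpow hq, ih]

section Phi
variable {q q' : ℝ} (hq : q ∈ Set.Ioo (0:ℝ) 1) (hq' : q' ∈ Set.Ioo (0:ℝ) 1)

lemma Phi_coe (f : ℝ → ℝ) :
    Filter.Germ.map (gq q q') ((f : ℝ → ℝ) : G) = ((fun ε => gq q q' (f ε) : ℝ → ℝ) : G) :=
  Filter.Germ.map_coe _ f

include hq hq' in
lemma Phi_elemF (L : List (ℕ × ℕ)) :
    Filter.Germ.map (gq q q') ((elemF q L : ℝ → ℝ) : G) = ((elemF q' L : ℝ → ℝ) : G) := by
  rw [Phi_coe]; congr 1; funext ε; exact gq_elemF hq hq' L ε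

lemma Phi_zero : Filter.Germ.map (gq q q') (0 : G) = 0 := by
  show Filter.Germ.map (gq q q') (((fun _ => (0:ℝ)) : ℝ → ℝ) : G) = (((fun _ => (0:ℝ)) : ℝ → ℝ) : G)
  rw [Phi_coe]; congr 1; funext ε; exact gq_zero q q'

include hq in
lemma Phi_one : Filter.Germ.map (gq q q') (1 : G) = 1 := by
  show Filter.Germ.map (gq q q') (((fun _ => (1:ℝ)) : ℝ → ℝ) : G) = (((fun _ => (1:ℝ)) : ℝ → ℝ) : G)
  rw [Phi_coe]; congr 1; funext ε; exact gq_one (q' := q') hq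

include hq hq' in
lemma Phi_mem {x : G} (hx : x ∈ gen q) : Filter.Germ.map (gq q q') x ∈ gen q' := by
  rw [gen_eq_S hq] at hx; rw [gen_eq_S hq']
  rcases hx with rfl | ⟨L, hL, rfl⟩
  · exact Or.inl (Phi_zero)
  · exact Or.inr ⟨L, hL, (Phi_elemF hq hq' L).symm ▸ rfl⟩

include hq hq' in
lemma Phi_Phi {x : G} (hx : x ∈ gen q) :
    Filter.Germ.map (gq q' q) (Filter.Germ.map (gq q q') x) = x := by
  rw [gen_eq_S hq] at hx
  rcases hx with rfl | ⟨L, hL, rfl⟩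
  · rw [Phi_zero, Phi_zero]
  · rw [Phi_elemF hq hq' L, Phi_elemF hq' hq L]

end Phi


/-- The germ semiring ℕ̄_ε: its elements are exactly the germs ε ↦ max_i q^(a_i+b_i(1+ε))
(together with 0 and 1), and up to canonical isomorphism (sending generators to
generators and preserving the operations) it does not depend on the choice of q ∈ (0,1). -/
theorem stmt17 (q q' : ℝ) (hq : q ∈ Set.Ioo (0 : ℝ) 1) (hq' : q' ∈ Set.Ioo (0 : ℝ) 1) :
    gen q = {x : Filter.Germ (nhds (0 : ℝ)) ℝ | x = 0 ∨ x = 1 ∨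
        ∃ L : List (ℕ × ℕ), L ≠ [] ∧ x = ((elemF q L : ℝ → ℝ) : Filter.Germ (nhds (0 : ℝ)) ℝ)} ∧
    ∃ Φ : Filter.Germ (nhds (0 : ℝ)) ℝ → Filter.Germ (nhds (0 : ℝ)) ℝ,
      Set.BijOn Φ (gen q) (gen q') ∧
      Φ ((fun _ : ℝ => q : ℝ → ℝ) : Filter.Germ (nhds (0 : ℝ)) ℝ)
        = ((fun _ : ℝ => q' : ℝ → ℝ) : Filter.Germ (nhds (0 : ℝ)) ℝ) ∧
      Φ ((fun ε : ℝ => q ^ (1 + ε) : ℝ → ℝ) : Filter.Germ (nhds (0 : ℝ)) ℝ)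
        = ((fun ε : ℝ => q' ^ (1 + ε) : ℝ → ℝ) : Filter.Germ (nhds (0 : ℝ)) ℝ) ∧
      Φ 0 = 0 ∧ Φ 1 = 1 ∧
      ∀ x ∈ gen q, ∀ y ∈ gen q, Φ (x ⊔ y) = Φ x ⊔ Φ y ∧ Φ (x * y) = Φ x * Φ y := by
  constructor
  · rw [gen_eq_S hq]
    ext x
    constructor
    · rintro (rfl | ⟨L, hL, rfl⟩)
      · exact Or.inl rfl
      · exact Or.inr (Or.inr ⟨L, hL, rfl⟩)
    · rintro (rfl | rfl | ⟨L, hL, rfl⟩)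
      · exact Or.inl rfl
      · exact Or.inr ⟨[((0:ℕ),(0:ℕ))], by simp, germ_one hq.1⟩
      · exact Or.inr ⟨L, hL, rfl⟩
  · refine ⟨Filter.Germ.map (gq q q'), ⟨fun x hx => Phi_mem hq hq' hx, ?_, ?_⟩, ?_, ?_,
      Phi_zero, Phi_one hq, ?_⟩
    · intro x hx y hy h
      rw [← Phi_Phi hq hq' hx, ← Phi_Phi hq hq' hy, h]
    · intro y hy
      exact ⟨Filter.Germ.map (gq q' q) y, Phi_mem hq' hq hy, Phi_Phi hq' hq hy⟩
    · -- Φ const q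
      rw [Phi_coe]; congr 1; funext ε
      have h := gq_rpow (q' := q') hq 1
      rw [Real.rpow_one, Real.rpow_one] at h; exact h
    · -- Φ generator
      rw [Phi_coe]; congr 1; funext ε
      exact gq_rpow hq (1 + ε)
    · -- hom properties
      intro x hx y hy
      rw [gen_eq_S hq] at hx hy
      rcases hx with rfl | ⟨L, hL, rfl⟩ <;> rcases hy with rfl | ⟨M, hM, rfl⟩
      · constructor
        · rw [sup_idem, Phi_zero, sup_idem]
        · rw [mul_zero, Phi_zero, mul_zero]
      · constructor
        · rw [zero_sup_elem, Phi_zero, Phi_elemF hq hq', zero_sup_elem]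
        · rw [zero_mul, Phi_zero, zero_mul]
      · constructor
        · rw [sup_comm, zero_sup_elem, Phi_zero, Phi_elemF hq hq', sup_comm, zero_sup_elem]
        · rw [mul_zero, Phi_zero, mul_zero]
      · constructor
        · rw [germ_sup, Phi_elemF hq hq', Phi_elemF hq hq', Phi_elemF hq hq', germ_sup]
        · rw [germ_mul hq.1, Phi_elemF hq hq', Phi_elemF hq hq', Phi_elemF hq hq',
            germ_mul hq'.1]
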